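/- Equivalence of the two-stage distributionally robust problem with its dual reformulation: let U be a nonempty set of first-stage decisions, g : U → ℝ a first-stage cost, μ : U → (L → ℝ) a decision-dependent moment bound, and H : U → 𝒜 → ℝ a decision-dependent recourse cost, and assume the ambiguity set P(μ u) is nonempty for every u ∈ U. Then the infimum over u ∈ U of g u plus the (attained) maximum of Σ_{a∈𝒜} q a · H u a over q ∈ P(μ u) equals the infimum, over all u ∈ U and all (ψ⁺, ψ⁻, φ) that are dual feasible for the data (μ u, H u), of g u + Σ_{l∈L} ψ⁺ l · (μ u) l + φ. -/

import Mathlib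

set_option linter.unusedSectionVars false
set_option linter.unusedVariables false
set_option maxHeartbeats 1000000

open Pointwise

section DROHelpers

variable {L : Type*} [Fintype L] [Nonempty L]

/-- Weak duality. -/
lemma dro_weak (𝒜 : Finset (L → ℝ))
    (hbin : ∀ a ∈ 𝒜, ∀ l : L, a l = 0 ∨ a l = 1)
    (μ : L → ℝ) (H : (L → ℝ) → ℝ)
    (q : (L → ℝ) → ℝ) (hq0 : ∀ a ∈ 𝒜, 0 ≤ q a) (hq1 : ∑ a ∈ 𝒜, q a = 1)
    (hqm : ∀ l : L, ∑ a ∈ 𝒜, q a * (1 - a l) ≤ μ l)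
    (ψp ψm : L → ℝ) (φ : ℝ) (hp : ∀ l, 0 ≤ ψp l) (hm : ∀ l, 0 ≤ ψm l)
    (hd : ∀ a ∈ 𝒜, ∑ l : L, (ψp l - ψm l) * (1 - a l) + φ ≥ H a) :
    ∑ a ∈ 𝒜, q a * H a ≤ ∑ l : L, ψp l * μ l + φ := by
  have hc : ∀ a ∈ 𝒜, ∀ l : L, 0 ≤ 1 - a l := by
    intro a ha l; rcases hbin a ha l with h | h <;> rw [h] <;> norm_num
  have hmom0 : ∀ l : L, 0 ≤ ∑ a ∈ 𝒜, q a * (1 - a l) := by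
    intro l
    exact Finset.sum_nonneg fun a ha => mul_nonneg (hq0 a ha) (hc a ha l)
  calc ∑ a ∈ 𝒜, q a * H a
      ≤ ∑ a ∈ 𝒜, q a * (∑ l : L, (ψp l - ψm l) * (1 - a l) + φ) :=
        Finset.sum_le_sum fun a ha => mul_le_mul_of_nonneg_left (hd a ha) (hq0 a ha)
    _ = ∑ l : L, (ψp l - ψm l) * (∑ a ∈ 𝒜, q a * (1 - a l)) + φ := by
        have e1 : ∀ a ∈ 𝒜, q a * (∑ l : L, (ψp l - ψm l) * (1 - a l) + φ)
            = (∑ l : L, (ψp l - ψm l) * (q a * (1 - a l))) + q a * φ := by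
          intro a _
          rw [mul_add, Finset.mul_sum]
          congr 1
          exact Finset.sum_congr rfl fun l _ => by ring
        rw [Finset.sum_congr rfl e1, Finset.sum_add_distrib, ← Finset.sum_mul, hq1, one_mul,
          Finset.sum_comm]
        congr 1
        exact Finset.sum_congr rfl fun l _ => by rw [Finset.mul_sum]
    _ ≤ ∑ l : L, ψp l * μ l + φ := by
        refine add_le_add_left (Finset.sum_le_sum fun l _ => ?_) φ
        have h1 : ψp l * (∑ a ∈ 𝒜, q a * (1 - a l)) ≤ ψp l * μ l :=
          mul_le_mul_of_nonneg_left (hqm l) (hp l)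
        have h2 : 0 ≤ ψm l * (∑ a ∈ 𝒜, q a * (1 - a l)) :=
          mul_nonneg (hm l) (hmom0 l)
        nlinarith [h1, h2]


/-- Attainment of the primal maximum. -/
lemma dro_attained (𝒜 : Finset (L → ℝ)) (h𝒜 : 𝒜.Nonempty)
    (μ : L → ℝ) (H : (L → ℝ) → ℝ)
    (hne : ∃ q : (L → ℝ) → ℝ,
      (∀ a ∈ 𝒜, 0 ≤ q a) ∧ (∑ a ∈ 𝒜, q a = 1) ∧
      (∀ l : L, ∑ a ∈ 𝒜, q a * (1 - a l) ≤ μ l)) :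
    ∃ m : ℝ, IsGreatest {x : ℝ | ∃ q : (L → ℝ) → ℝ,
      ((∀ a ∈ 𝒜, 0 ≤ q a) ∧ (∑ a ∈ 𝒜, q a = 1) ∧
        (∀ l : L, ∑ a ∈ 𝒜, q a * (1 - a l) ≤ μ l)) ∧
      x = ∑ a ∈ 𝒜, q a * H a} m := by
  classical
  set P : Set (↥𝒜 → ℝ) := {p | (∀ a, 0 ≤ p a) ∧ (∑ a, p a = 1) ∧
    ∀ l : L, ∑ a : ↥𝒜, p a * (1 - (a : L → ℝ) l) ≤ μ l} with hP
  -- extension of p to a function on all of L → ℝ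
  have hext : ∀ p ∈ P, ∃ q : (L → ℝ) → ℝ,
      ((∀ a ∈ 𝒜, 0 ≤ q a) ∧ (∑ a ∈ 𝒜, q a = 1) ∧
        (∀ l : L, ∑ a ∈ 𝒜, q a * (1 - a l) ≤ μ l)) ∧
      (∑ a ∈ 𝒜, q a * H a) = ∑ a : ↥𝒜, p a * H ↑a := by
    intro p hp
    refine ⟨fun a => if h : a ∈ 𝒜 then p ⟨a, h⟩ else 0, ⟨?_, ?_, ?_⟩, ?_⟩
    · intro a ha; simp only [dif_pos ha]; exact hp.1 _
    · rw [← Finset.sum_coe_sort 𝒜]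
      rw [← hp.2.1]
      exact Finset.sum_congr rfl fun a _ => by rw [dif_pos a.2]
    · intro l
      rw [← Finset.sum_coe_sort 𝒜 (fun a => (if h : a ∈ 𝒜 then p ⟨a, h⟩ else 0) * (1 - a l))]
      refine le_trans (le_of_eq ?_) (hp.2.2 l)
      exact Finset.sum_congr rfl fun a _ => by rw [dif_pos a.2]
    · rw [← Finset.sum_coe_sort 𝒜 (fun a => (if h : a ∈ 𝒜 then p ⟨a, h⟩ else 0) * H a)]
      exact Finset.sum_congr rfl fun a _ => by rw [dif_pos a.2]
  have hres : ∀ q : (L → ℝ) → ℝ,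
      ((∀ a ∈ 𝒜, 0 ≤ q a) ∧ (∑ a ∈ 𝒜, q a = 1) ∧
        (∀ l : L, ∑ a ∈ 𝒜, q a * (1 - a l) ≤ μ l)) →
      (fun a : ↥𝒜 => q ↑a) ∈ P ∧ (∑ a ∈ 𝒜, q a * H a) = ∑ a : ↥𝒜, q ↑a * H ↑a := by
    intro q hq
    refine ⟨⟨fun a => hq.1 ↑a a.2, ?_, ?_⟩, ?_⟩
    · rw [Finset.sum_coe_sort 𝒜 q]; exact hq.2.1
    · intro l; rw [Finset.sum_coe_sort 𝒜 (fun a => q a * (1 - a l))]; exact hq.2.2 l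
    · exact (Finset.sum_coe_sort 𝒜 fun a => q a * H a).symm
  -- compactness of P
  have hPclosed : IsClosed P := by
    have : P = (⋂ a : ↥𝒜, {p : ↥𝒜 → ℝ | 0 ≤ p a}) ∩
        ({p : ↥𝒜 → ℝ | ∑ a, p a = 1} ∩
          ⋂ l : L, {p : ↥𝒜 → ℝ | ∑ a : ↥𝒜, p a * (1 - (a : L → ℝ) l) ≤ μ l}) := by
      ext p; constructor
      · intro hp; exact ⟨Set.mem_iInter.2 hp.1, hp.2.1, Set.mem_iInter.2 hp.2.2⟩
      · rintro ⟨h1, h2, h3⟩; exact ⟨Set.mem_iInter.1 h1, h2, Set.mem_iInter.1 h3⟩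
    rw [this]
    refine IsClosed.inter (isClosed_iInter fun a =>
      isClosed_le continuous_const (continuous_apply a)) (IsClosed.inter ?_ ?_)
    · exact isClosed_eq (continuous_finset_sum _ fun a _ => continuous_apply a) continuous_const
    · exact isClosed_iInter fun l => isClosed_le
        (continuous_finset_sum _ fun a _ => (continuous_apply a).mul continuous_const)
        continuous_const
  have hPsub : P ⊆ Set.Icc (0 : ↥𝒜 → ℝ) 1 := by
    intro p hp
    constructor
    · intro a; exact hp.1 a
    · intro a
      have := Finset.single_le_sum (f := p) (fun b _ => hp.1 b) (Finset.mem_univ a)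
      rw [hp.2.1] at this
      exact this
  have hPcomp : IsCompact P := isCompact_Icc.of_isClosed_subset hPclosed hPsub
  obtain ⟨q0, hq0⟩ := hne
  have hPne : P.Nonempty := ⟨fun a : ↥𝒜 => q0 ↑a, (hres q0 hq0).1⟩
  obtain ⟨pm, hpmP, hpm⟩ := hPcomp.exists_isMaxOn hPne
    (Continuous.continuousOn (continuous_finset_sum _ fun a _ =>
      (continuous_apply a).mul continuous_const) (s := P))
  obtain ⟨qm, hqmF, hqmE⟩ := hext pm hpmP
  refine ⟨∑ a : ↥𝒜, pm a * H ↑a, ⟨qm, hqmF, hqmE.symm⟩, ?_⟩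
  rintro x ⟨q, hq, rfl⟩
  rw [(hres q hq).2]
  exact hpm (hres q hq).1

/-- Strong duality: for every `ε > 0` there is a dual feasible point with
objective value `m + ε`, where `m` is an upper bound of the primal values. -/
lemma dro_strong (𝒜 : Finset (L → ℝ)) (h𝒜 : 𝒜.Nonempty)
    (hbin : ∀ a ∈ 𝒜, ∀ l : L, a l = 0 ∨ a l = 1)
    (μ : L → ℝ) (H : (L → ℝ) → ℝ)
    (hne : ∃ q : (L → ℝ) → ℝ,
      (∀ a ∈ 𝒜, 0 ≤ q a) ∧ (∑ a ∈ 𝒜, q a = 1) ∧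
      (∀ l : L, ∑ a ∈ 𝒜, q a * (1 - a l) ≤ μ l))
    {m : ℝ}
    (hub : ∀ q : (L → ℝ) → ℝ,
      ((∀ a ∈ 𝒜, 0 ≤ q a) ∧ (∑ a ∈ 𝒜, q a = 1) ∧
        (∀ l : L, ∑ a ∈ 𝒜, q a * (1 - a l) ≤ μ l)) →
      ∑ a ∈ 𝒜, q a * H a ≤ m)
    {ε : ℝ} (hε : 0 < ε) :
    ∃ (ψ : L → ℝ) (φ : ℝ), (∀ l, 0 ≤ ψ l) ∧
      (∀ a ∈ 𝒜, ∑ l : L, ψ l * (1 - a l) + φ ≥ H a) ∧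
      ∑ l : L, ψ l * μ l + φ = m + ε := by
  classical
  -- linear part of the map sending a pmf to (moments, expected cost)
  set Tl : (↥𝒜 → ℝ) →ₗ[ℝ] ((L → ℝ) × ℝ) :=
    { toFun := fun p => (fun l => ∑ a : ↥𝒜, p a * (1 - (a : L → ℝ) l), ∑ a : ↥𝒜, p a * H ↑a)
      map_add' := by
        intro p r
        refine Prod.ext ?_ ?_
        · funext l
          simp only [Prod.mk_add_mk, Prod.fst_add, Pi.add_apply, add_mul]
          rw [Finset.sum_add_distrib]
        · simp only [Prod.mk_add_mk, Prod.snd_add, Pi.add_apply, add_mul]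
          rw [Finset.sum_add_distrib]
      map_smul' := by
        intro c p
        refine Prod.ext ?_ ?_
        · funext l
          simp only [Prod.smul_mk, Prod.smul_fst, Pi.smul_apply, smul_eq_mul,
            RingHom.id_apply, Finset.mul_sum, mul_assoc]
        · simp only [Prod.smul_mk, Prod.smul_snd, Pi.smul_apply, smul_eq_mul,
            RingHom.id_apply, Finset.mul_sum, mul_assoc] } with hTl
  have hTlapp : ∀ p : ↥𝒜 → ℝ, Tl p =
      (fun l => ∑ a : ↥𝒜, p a * (1 - (a : L → ℝ) l), ∑ a : ↥𝒜, p a * H ↑a) := fun p => rfl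
  have hTc : Continuous Tl := Tl.continuous_of_finiteDimensional
  set Δ : Set (↥𝒜 → ℝ) := {p | (∀ a, 0 ≤ p a) ∧ ∑ a, p a = 1} with hΔ
  have hΔconv : Convex ℝ Δ := by
    rintro p ⟨hp0, hp1⟩ r ⟨hr0, hr1⟩ s t hs ht hst
    constructor
    · intro a
      have : (s • p + t • r) a = s * p a + t * r a := by
        simp [Pi.add_apply, Pi.smul_apply, smul_eq_mul]
      rw [this]
      exact add_nonneg (mul_nonneg hs (hp0 a)) (mul_nonneg ht (hr0 a))
    · have : ∀ a : ↥𝒜, (s • p + t • r) a = s * p a + t * r a := by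
        intro a; simp [Pi.add_apply, Pi.smul_apply, smul_eq_mul]
      rw [Finset.sum_congr rfl fun a _ => this a, Finset.sum_add_distrib,
        ← Finset.mul_sum, ← Finset.mul_sum, hp1, hr1, mul_one, mul_one]
      exact hst
  have hΔclosed : IsClosed Δ := by
    have : Δ = (⋂ a : ↥𝒜, {p : ↥𝒜 → ℝ | 0 ≤ p a}) ∩ {p : ↥𝒜 → ℝ | ∑ a, p a = 1} := by
      ext p; constructor
      · intro hp; exact ⟨Set.mem_iInter.2 hp.1, hp.2⟩
      · rintro ⟨h1, h2⟩; exact ⟨Set.mem_iInter.1 h1, h2⟩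
    rw [this]
    exact IsClosed.inter (isClosed_iInter fun a =>
        isClosed_le continuous_const (continuous_apply a))
      (isClosed_eq (continuous_finset_sum _ fun a _ => continuous_apply a) continuous_const)
  have hΔcomp : IsCompact Δ := by
    refine (isCompact_Icc (a := (0 : ↥𝒜 → ℝ)) (b := 1)).of_isClosed_subset hΔclosed ?_
    rintro p ⟨hp0, hp1⟩
    refine ⟨fun a => hp0 a, fun a => ?_⟩
    have := Finset.single_le_sum (f := p) (fun b _ => hp0 b) (Finset.mem_univ a)
    rw [hp1] at this; exact this
  set c0 : (L → ℝ) × ℝ := (fun l => -μ l, 0) with hc0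
  set A : Set ((L → ℝ) × ℝ) := (fun p => Tl p + c0) '' Δ with hA
  set N : Set ((L → ℝ) × ℝ) := {z | (∀ l, 0 ≤ z.1 l) ∧ z.2 ≤ 0} with hN
  have hAcomp : IsCompact A := hΔcomp.image (hTc.add continuous_const)
  have hAconv : Convex ℝ A := by
    have h1 : Convex ℝ (Tl '' Δ) := hΔconv.linear_image Tl
    have h2 : A = (fun x => c0 + x) '' (Tl '' Δ) := by
      rw [hA, Set.image_image]
      exact Set.image_congr fun p _ => (add_comm c0 (Tl p)).symm
    rw [h2]; exact h1.translate c0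
  have hNclosed : IsClosed N := by
    have : N = (⋂ l : L, {z : (L → ℝ) × ℝ | 0 ≤ z.1 l}) ∩ {z : (L → ℝ) × ℝ | z.2 ≤ 0} := by
      ext z; constructor
      · intro hz; exact ⟨Set.mem_iInter.2 hz.1, hz.2⟩
      · rintro ⟨h1, h2⟩; exact ⟨Set.mem_iInter.1 h1, h2⟩
    rw [this]
    exact IsClosed.inter (isClosed_iInter fun l =>
        isClosed_le continuous_const ((continuous_apply l).comp continuous_fst))
      (isClosed_le continuous_snd continuous_const)
  have hNconv : Convex ℝ N := by
    rintro z ⟨hz1, hz2⟩ w ⟨hw1, hw2⟩ s t hs ht hst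
    constructor
    · intro l
      have : (s • z + t • w).1 l = s * z.1 l + t * w.1 l := by
        simp [Prod.fst_add, Prod.smul_fst, Pi.add_apply, Pi.smul_apply, smul_eq_mul]
      rw [this]
      exact add_nonneg (mul_nonneg hs (hz1 l)) (mul_nonneg ht (hw1 l))
    · have : (s • z + t • w).2 = s * z.2 + t * w.2 := by
        simp [Prod.snd_add, Prod.smul_snd, smul_eq_mul]
      rw [this]
      have h1 : s * z.2 ≤ 0 := mul_nonpos_of_nonneg_of_nonpos hs hz2
      have h2 : t * w.2 ≤ 0 := mul_nonpos_of_nonneg_of_nonpos ht hw2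
      linarith
  set K : Set ((L → ℝ) × ℝ) := A + N with hK
  have hKclosed : IsClosed K := hNclosed.add_left_of_isCompact hAcomp
  have hKconv : Convex ℝ K := hAconv.add hNconv
  have hmemK : ∀ p ∈ Δ, ∀ n ∈ N, (Tl p + c0) + n ∈ K := fun p hp n hn =>
    Set.add_mem_add ⟨p, hp, rfl⟩ hn
  -- the point to be separated
  set pt : (L → ℝ) × ℝ := (fun _ => 0, m + ε) with hpt
  have hptK : pt ∉ K := by
    intro hmem
    rw [hK, Set.mem_add] at hmem
    obtain ⟨x, hxA, y, hyN, hxy⟩ := hmem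
    rw [hA] at hxA
    obtain ⟨p, hpΔ, rfl⟩ := hxA
    set q : (L → ℝ) → ℝ := fun a => if h : a ∈ 𝒜 then p ⟨a, h⟩ else 0 with hq
    have hsum : ∀ X : (L → ℝ) → ℝ, ∑ a ∈ 𝒜, q a * X a = ∑ a : ↥𝒜, p a * X ↑a := by
      intro X
      rw [← Finset.sum_coe_sort 𝒜 (fun a => q a * X a)]
      exact Finset.sum_congr rfl fun a _ => by simp [hq, dif_pos a.2]
    have hfst : ∀ l, (Tl p + c0).1 l + y.1 l = 0 := fun l => congrFun (congrArg Prod.fst hxy) l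
    have hsnd : (Tl p + c0).2 + y.2 = m + ε := congrArg Prod.snd hxy
    have hcomp1 : ∀ l, (Tl p + c0).1 l = (∑ a : ↥𝒜, p a * (1 - (a : L → ℝ) l)) - μ l := by
      intro l
      rw [hTlapp, hc0]
      simp [Prod.mk_add_mk, sub_eq_add_neg]
    have hcomp2 : (Tl p + c0).2 = ∑ a : ↥𝒜, p a * H ↑a := by
      rw [hTlapp, hc0]; simp [Prod.mk_add_mk]
    have hfeas : (∀ a ∈ 𝒜, 0 ≤ q a) ∧ (∑ a ∈ 𝒜, q a = 1) ∧
        (∀ l : L, ∑ a ∈ 𝒜, q a * (1 - a l) ≤ μ l) := by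
      refine ⟨fun a ha => by simp only [hq, dif_pos ha]; exact hpΔ.1 _, ?_, ?_⟩
      · have h1 := hsum (fun _ => 1)
        simp only [mul_one] at h1
        rw [h1]; exact hpΔ.2
      · intro l
        rw [hsum (fun a => 1 - a l)]
        have h1 := hfst l
        have h2 := hcomp1 l
        have h3 := hyN.1 l
        linarith
    have hcost : m + ε ≤ ∑ a ∈ 𝒜, q a * H a := by
      rw [hsum H]
      have := hyN.2
      rw [hcomp2] at hsnd
      linarith
    have := hub q hfeas
    linarith
  obtain ⟨f, u, hfK, hfu⟩ := geometric_hahn_banach_closed_point hKconv hKclosed hptK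
  -- decomposition of the separating functional
  have hdec : ∀ z : (L → ℝ) × ℝ,
      f z = ∑ l : L, z.1 l * f (Pi.single l 1, 0) + z.2 * f (0, 1) := by
    intro z
    have hz : z = (∑ l : L, z.1 l • ((Pi.single l 1, 0) : (L → ℝ) × ℝ)) + z.2 • (0, 1) := by
      refine Prod.ext ?_ ?_
      · funext j
        rw [Prod.fst_add, Prod.fst_sum]
        simp only [Prod.smul_mk, Prod.smul_fst, Pi.add_apply, Finset.sum_apply,
          Pi.smul_apply, Pi.single_apply, smul_eq_mul, mul_ite, mul_one, mul_zero,
          Finset.sum_ite_eq, Finset.mem_univ, if_true, Pi.zero_apply, add_zero]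
      · rw [Prod.snd_add, Prod.snd_sum]
        simp only [Prod.smul_mk, Prod.smul_snd, smul_eq_mul, mul_zero, mul_one,
          Finset.sum_const_zero, zero_add]
    calc f z = f ((∑ l : L, z.1 l • ((Pi.single l 1, 0) : (L → ℝ) × ℝ)) + z.2 • (0, 1)) :=
          congrArg f hz
      _ = ∑ l : L, z.1 l * f (Pi.single l 1, 0) + z.2 * f (0, 1) := by
          rw [map_add, map_sum, map_smul]
          simp only [map_smul, smul_eq_mul]
  -- base point of K
  obtain ⟨a0, ha0⟩ := h𝒜
  have hδ : ∀ a : ↥𝒜, (fun b : ↥𝒜 => if b = a then (1 : ℝ) else 0) ∈ Δ := by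
    intro a
    constructor
    · intro b; dsimp only; split <;> norm_num
    · simp
  have hTδ : ∀ a : ↥𝒜, Tl (fun b => if b = a then (1 : ℝ) else 0) =
      (fun l => 1 - (a : L → ℝ) l, H ↑a) := by
    intro a
    rw [hTlapp]
    refine Prod.ext ?_ ?_
    · funext l; simp [ite_mul, one_mul, zero_mul, Finset.sum_ite_eq']
    · simp [ite_mul, one_mul, zero_mul, Finset.sum_ite_eq']
  set z0 : (L → ℝ) × ℝ := Tl (fun b => if b = ⟨a0, ha0⟩ then (1 : ℝ) else 0) + c0 with hz0
  have hz0K : ∀ n ∈ N, z0 + n ∈ K := fun n hn => hmemK _ (hδ _) n hn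
  have h0N : (0 : (L → ℝ) × ℝ) ∈ N := ⟨fun l => le_of_eq rfl, le_refl 0⟩
  have hz0u : f z0 < u := by
    have := hfK _ (hz0K 0 h0N)
    rwa [add_zero] at this
  -- the multipliers are nonpositive
  have hlam : ∀ l : L, f (Pi.single l 1, 0) ≤ 0 := by
    intro l
    by_contra hcon
    push_neg at hcon
    have hray : ∀ s : ℝ, 0 ≤ s → f z0 + s * f (Pi.single l 1, 0) < u := by
      intro s hs
      have hnN : s • ((Pi.single l (1 : ℝ), (0 : ℝ)) : (L → ℝ) × ℝ) ∈ N := by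
        rw [Prod.smul_mk, smul_zero]
        refine ⟨fun j => ?_, le_refl 0⟩
        simp only [Pi.smul_apply, Pi.single_apply, smul_eq_mul, mul_ite, mul_one, mul_zero]
        split
        · exact hs
        · exact le_refl 0
      have hmem := hfK _ (hz0K _ hnN)
      rw [map_add, map_smul, smul_eq_mul] at hmem
      exact hmem
    have hs : 0 ≤ (u - f z0) / f (Pi.single l 1, 0) + 1 := by
      have h1 : 0 < (u - f z0) / f (Pi.single l 1, 0) := div_pos (by linarith) hcon
      linarith
    have := hray _ hs
    rw [add_mul, div_mul_cancel₀ _ (ne_of_gt hcon), one_mul] at this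
    linarith
  have hβ : 0 ≤ f ((0 : L → ℝ), (1 : ℝ)) := by
    by_contra hcon
    push_neg at hcon
    have hray : ∀ s : ℝ, 0 ≤ s → f z0 + s * (-f ((0 : L → ℝ), (1 : ℝ))) < u := by
      intro s hs
      have hnN : (-s) • (((0 : L → ℝ), (1 : ℝ)) : (L → ℝ) × ℝ) ∈ N := by
        rw [Prod.smul_mk, smul_zero, smul_eq_mul, mul_one]
        exact ⟨fun j => le_of_eq rfl, neg_nonpos.mpr hs⟩
      have hmem := hfK _ (hz0K _ hnN)
      rw [map_add, map_smul, smul_eq_mul] at hmem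
      linarith
    have hpos : 0 < -f ((0 : L → ℝ), (1 : ℝ)) := by linarith
    have hs : 0 ≤ (u - f z0) / (-f ((0 : L → ℝ), (1 : ℝ))) + 1 := by
      have h1 : 0 < (u - f z0) / (-f ((0 : L → ℝ), (1 : ℝ))) := div_pos (by linarith) hpos
      linarith
    have := hray _ hs
    rw [add_mul, div_mul_cancel₀ _ (ne_of_gt hpos), one_mul] at this
    linarith
  have hfpt : f pt = (m + ε) * f ((0 : L → ℝ), (1 : ℝ)) := by
    rw [hdec pt]
    simp [hpt]
  -- β is strictly positive
  have hβpos : 0 < f ((0 : L → ℝ), (1 : ℝ)) := by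
    rcases hβ.lt_or_eq with h | h
    · exact h
    exfalso
    obtain ⟨q0, hq00, hq01, hq0m⟩ := hne
    set p0 : ↥𝒜 → ℝ := fun a => q0 ↑a with hp0
    have hp0Δ : p0 ∈ Δ := by
      refine ⟨fun a => hq00 ↑a a.2, ?_⟩
      rw [hp0]; rw [Finset.sum_coe_sort 𝒜 q0]; exact hq01
    have hp0m : ∀ l : L, ∑ a : ↥𝒜, p0 a * (1 - (a : L → ℝ) l) ≤ μ l := by
      intro l
      rw [hp0]
      rw [Finset.sum_coe_sort 𝒜 (fun a => q0 a * (1 - a l))]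
      exact hq0m l
    set z1 : (L → ℝ) × ℝ := Tl p0 + c0 with hz1
    have hz1K : z1 ∈ K := by
      have := hmemK _ hp0Δ 0 h0N
      rwa [add_zero] at this
    have hz1u : f z1 < u := hfK _ hz1K
    have hu0 : u < 0 := by
      have := hfu
      rw [hfpt, ← h, mul_zero] at this
      exact this
    have hz1comp : ∀ l, z1.1 l = (∑ a : ↥𝒜, p0 a * (1 - (a : L → ℝ) l)) - μ l := by
      intro l
      rw [hz1, hTlapp, hc0]
      simp [Prod.mk_add_mk, sub_eq_add_neg]
    have hz1f : 0 ≤ f z1 := by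
      rw [hdec z1, ← h, mul_zero, add_zero]
      refine Finset.sum_nonneg fun l _ => ?_
      have h1 : z1.1 l ≤ 0 := by rw [hz1comp l]; linarith [hp0m l]
      nlinarith [h1, hlam l]
    linarith
  -- construct the dual solution
  set ψ : L → ℝ := fun l => -f (Pi.single l 1, 0) / f ((0 : L → ℝ), (1 : ℝ)) with hψ
  set φ : ℝ := (m + ε) - ∑ l : L, ψ l * μ l with hφ
  have hψ0 : ∀ l, 0 ≤ ψ l := by
    intro l
    rw [hψ]
    exact div_nonneg (by linarith [hlam l]) (le_of_lt hβpos)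
  have hψβ : ∀ l, f ((0 : L → ℝ), (1 : ℝ)) * ψ l = -f (Pi.single l 1, 0) := by
    intro l
    rw [hψ, mul_comm, div_mul_cancel₀ _ (ne_of_gt hβpos)]
  refine ⟨ψ, φ, hψ0, ?_, by rw [hφ]; ring⟩
  intro a ha
  -- evaluate the separating inequality at the Dirac measure on `a`
  have hzaK : Tl (fun b => if b = (⟨a, ha⟩ : ↥𝒜) then (1 : ℝ) else 0) + c0 ∈ K := by
    have := hmemK _ (hδ ⟨a, ha⟩) 0 h0N
    rwa [add_zero] at this
  have hkey : ∑ l : L, ((1 - a l) - μ l) * f (Pi.single l 1, 0)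
      + H a * f ((0 : L → ℝ), (1 : ℝ)) < (m + ε) * f ((0 : L → ℝ), (1 : ℝ)) := by
    have h1 := hfK _ hzaK
    have h2 : f (Tl (fun b => if b = (⟨a, ha⟩ : ↥𝒜) then (1 : ℝ) else 0) + c0)
        = ∑ l : L, ((1 - a l) - μ l) * f (Pi.single l 1, 0)
          + H a * f ((0 : L → ℝ), (1 : ℝ)) := by
      rw [hdec]
      congr 1
      · refine Finset.sum_congr rfl fun l _ => ?_
        congr 1
        rw [hTδ ⟨a, ha⟩, hc0]
        simp [Prod.mk_add_mk, sub_eq_add_neg]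
      · congr 1
        rw [hTδ ⟨a, ha⟩, hc0]
        simp [Prod.mk_add_mk]
    rw [h2] at h1
    calc ∑ l : L, ((1 - a l) - μ l) * f (Pi.single l 1, 0)
        + H a * f ((0 : L → ℝ), (1 : ℝ)) < u := h1
      _ < (m + ε) * f ((0 : L → ℝ), (1 : ℝ)) := by rw [← hfpt]; exact hfu
  have hsplit : ∑ l : L, ((1 - a l) - μ l) * f (Pi.single l 1, 0)
      = ∑ l : L, (1 - a l) * f (Pi.single l 1, 0) - ∑ l : L, μ l * f (Pi.single l 1, 0) := by
    rw [← Finset.sum_sub_distrib]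
    exact Finset.sum_congr rfl fun l _ => by ring
  rw [ge_iff_le, ← mul_le_mul_iff_right₀ hβpos]
  have h1 : ∑ l : L, f ((0 : L → ℝ), (1 : ℝ)) * (ψ l * (1 - a l))
      = -∑ l : L, (1 - a l) * f (Pi.single l 1, 0) := by
    rw [← Finset.sum_neg_distrib]
    refine Finset.sum_congr rfl fun l _ => ?_
    rw [← mul_assoc, hψβ l]; ring
  have h2 : ∑ l : L, f ((0 : L → ℝ), (1 : ℝ)) * (ψ l * μ l)
      = -∑ l : L, μ l * f (Pi.single l 1, 0) := by
    rw [← Finset.sum_neg_distrib]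
    refine Finset.sum_congr rfl fun l _ => ?_
    rw [← mul_assoc, hψβ l]; ring
  have hexp : f ((0 : L → ℝ), (1 : ℝ)) * (∑ l : L, ψ l * (1 - a l) + φ)
      = (-∑ l : L, (1 - a l) * f (Pi.single l 1, 0))
        + (f ((0 : L → ℝ), (1 : ℝ)) * (m + ε) + ∑ l : L, μ l * f (Pi.single l 1, 0)) := by
    rw [mul_add, Finset.mul_sum, h1, hφ, mul_sub, Finset.mul_sum, h2]
    ring
  rw [hexp]
  nlinarith [hkey, hsplit]

end DROHelpers

/-- Equivalence of the two-stage distributionally robust problem with its dual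
reformulation: the infimum over first-stage decisions `u` of the first-stage cost
plus the attained worst-case expected recourse cost over the decision-dependent
ambiguity set `P(μ u)` equals the infimum over `u` and dual feasible points
`(ψ⁺, ψ⁻, φ)` of the first-stage cost plus the dual objective. -/
theorem two_stage_dro_dual_reformulation
    {L : Type*} [Fintype L] [Nonempty L]
    {U : Type*} [Nonempty U]
    (𝒜 : Finset (L → ℝ)) (h𝒜 : 𝒜.Nonempty)
    (hbin : ∀ a ∈ 𝒜, ∀ l : L, a l = 0 ∨ a l = 1)
    (g : U → ℝ) (μ : U → L → ℝ) (H : U → (L → ℝ) → ℝ)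
    (hne : ∀ u : U, ∃ q : (L → ℝ) → ℝ,
      (∀ a ∈ 𝒜, 0 ≤ q a) ∧ (∑ a ∈ 𝒜, q a = 1) ∧
      (∀ l : L, ∑ a ∈ 𝒜, q a * (1 - a l) ≤ μ u l)) :
    sInf {v : ℝ | ∃ (u : U) (m : ℝ),
        IsGreatest {x : ℝ | ∃ q : (L → ℝ) → ℝ,
          ((∀ a ∈ 𝒜, 0 ≤ q a) ∧ (∑ a ∈ 𝒜, q a = 1) ∧
            (∀ l : L, ∑ a ∈ 𝒜, q a * (1 - a l) ≤ μ u l)) ∧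
          x = ∑ a ∈ 𝒜, q a * H u a} m ∧
        v = g u + m} =
      sInf {v : ℝ | ∃ (u : U) (ψp ψm : L → ℝ) (φ : ℝ),
        ((∀ l : L, 0 ≤ ψp l) ∧ (∀ l : L, 0 ≤ ψm l) ∧
          (∀ a ∈ 𝒜, ∑ l : L, (ψp l - ψm l) * (1 - a l) + φ ≥ H u a)) ∧
        v = g u + (∑ l : L, ψp l * μ u l + φ)} := by
  classical
  set S : Set ℝ := {v : ℝ | ∃ (u : U) (m : ℝ),
      IsGreatest {x : ℝ | ∃ q : (L → ℝ) → ℝ,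
        ((∀ a ∈ 𝒜, 0 ≤ q a) ∧ (∑ a ∈ 𝒜, q a = 1) ∧
          (∀ l : L, ∑ a ∈ 𝒜, q a * (1 - a l) ≤ μ u l)) ∧
        x = ∑ a ∈ 𝒜, q a * H u a} m ∧
      v = g u + m} with hSdef
  set T : Set ℝ := {v : ℝ | ∃ (u : U) (ψp ψm : L → ℝ) (φ : ℝ),
      ((∀ l : L, 0 ≤ ψp l) ∧ (∀ l : L, 0 ≤ ψm l) ∧
        (∀ a ∈ 𝒜, ∑ l : L, (ψp l - ψm l) * (1 - a l) + φ ≥ H u a)) ∧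
      v = g u + (∑ l : L, ψp l * μ u l + φ)} with hTdef
  have hmax : ∀ u : U, ∃ m : ℝ, IsGreatest {x : ℝ | ∃ q : (L → ℝ) → ℝ,
      ((∀ a ∈ 𝒜, 0 ≤ q a) ∧ (∑ a ∈ 𝒜, q a = 1) ∧
        (∀ l : L, ∑ a ∈ 𝒜, q a * (1 - a l) ≤ μ u l)) ∧
      x = ∑ a ∈ 𝒜, q a * H u a} m :=
    fun u => dro_attained 𝒜 h𝒜 (μ u) (H u) (hne u)
  have hSne : S.Nonempty := by
    obtain ⟨m, hm⟩ := hmax (Classical.arbitrary U)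
    exact ⟨g (Classical.arbitrary U) + m, ⟨Classical.arbitrary U, m, hm, rfl⟩⟩
  have h1 : ∀ t ∈ T, ∃ s ∈ S, s ≤ t := by
    rintro t ⟨u, ψp, ψm, φ, ⟨hp, hm', hd⟩, rfl⟩
    obtain ⟨m, hmg⟩ := hmax u
    refine ⟨g u + m, ⟨u, m, hmg, rfl⟩, ?_⟩
    obtain ⟨q, hq, hqe⟩ := hmg.1
    have hwk := dro_weak 𝒜 hbin (μ u) (H u) q hq.1 hq.2.1 hq.2.2 ψp ψm φ hp hm' hd
    rw [hqe]
    linarith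
  have h2 : ∀ s ∈ S, ∀ ε : ℝ, 0 < ε → ∃ t ∈ T, t ≤ s + ε := by
    rintro s ⟨u, m, hmg, rfl⟩ ε hε
    have hub : ∀ q : (L → ℝ) → ℝ,
        ((∀ a ∈ 𝒜, 0 ≤ q a) ∧ (∑ a ∈ 𝒜, q a = 1) ∧
          (∀ l : L, ∑ a ∈ 𝒜, q a * (1 - a l) ≤ μ u l)) →
        ∑ a ∈ 𝒜, q a * H u a ≤ m := fun q hq => hmg.2 ⟨q, hq, rfl⟩
    obtain ⟨ψ, φ, hψ0, hfeas, hobj⟩ := dro_strong 𝒜 h𝒜 hbin (μ u) (H u) (hne u) hub hε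
    refine ⟨g u + (∑ l : L, ψ l * μ u l + φ),
      ⟨u, ψ, fun _ => 0, φ, ⟨hψ0, fun _ => le_refl 0, ?_⟩, rfl⟩, ?_⟩
    · intro a ha
      have := hfeas a ha
      simpa [sub_zero] using this
    · rw [hobj]; linarith
  by_cases hbdd : BddBelow S
  · have hTne : T.Nonempty := by
      obtain ⟨s, hs⟩ := hSne
      obtain ⟨t, ht, _⟩ := h2 s hs 1 one_pos
      exact ⟨t, ht⟩
    have hTbdd : BddBelow T := by
      obtain ⟨b, hb⟩ := hbdd
      exact ⟨b, fun t ht => by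
        obtain ⟨s, hs, hst⟩ := h1 t ht
        exact le_trans (hb hs) hst⟩
    apply le_antisymm
    · refine le_csInf hTne fun t ht => ?_
      obtain ⟨s, hs, hst⟩ := h1 t ht
      exact le_trans (csInf_le hbdd hs) hst
    · refine le_csInf hSne fun s hs => ?_
      refine le_of_forall_sub_le fun ε hε => ?_
      obtain ⟨t, ht, hts⟩ := h2 s hs ε hε
      have := csInf_le hTbdd ht
      linarith
  · have hTbdd : ¬ BddBelow T := by
      rintro ⟨b, hb⟩
      apply hbdd
      refine ⟨b - 1, fun s hs => ?_⟩
      obtain ⟨t, ht, hts⟩ := h2 s hs 1 one_pos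
      have := hb ht
      linarith
    rw [Real.sInf_of_not_bddBelow hbdd, Real.sInf_of_not_bddBelow hTbdd]
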